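/- arXiv:1009.0300 — 2 statements merged into one kernel-verified Lean document; each statement's English description precedes it below -/
import Mathlib

section
/- For an election E, a candidate c, and k > 0: there exists an election E¹ obtained from E by only adding voters in which c is the Condorcet winner and at most k voters were added, if and only if there exists an election E² obtained from E by deleting some voters and adding some voters, in which c is the Condorcet winner, and the total number of deleted plus added voters is at most k. -/
/-- Number of voters preferring `a` to `b`. -/
noncomputable def countPref {V C : Type*} [Fintype V] (O : V → C → C → Prop) (a b : C) : ℕ :=
  Nat.card {i : V // O i a b}

/-- `c` is a Condorcet winner: a strict majority of voters prefers `c` to every other candidate. -/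
def IsCondorcetWinner {V C : Type*} [Fintype V] (O : V → C → C → Prop) (c : C) : Prop :=
  ∀ b : C, b ≠ c → Fintype.card V < 2 * countPref O c b

section Aux

/-- A strict total order with `c` on top. -/
def cTopRel {C : Type*} (c : C) (a b : C) : Prop :=
  (a = c ∧ b ≠ c) ∨ (a ≠ c ∧ b ≠ c ∧ WellOrderingRel a b)

lemma cTopRel_sto {C : Type*} (c : C) : IsStrictTotalOrder C (cTopRel c) := by
  haveI : IsWellOrder C WellOrderingRel := WellOrderingRel.isWellOrder
  refine { trichotomous := ?_, irrefl := ?_, trans := ?_ }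
  · intro a b h1 h2
    suffices H : cTopRel c a b ∨ a = b ∨ cTopRel c b a from
      H.elim (fun h => absurd h h1) (fun h => h.elim id (fun h => absurd h h2))
    by_cases ha : a = c <;> by_cases hb : b = c
    · exact Or.inr (Or.inl (ha.trans hb.symm))
    · exact Or.inl (Or.inl ⟨ha, hb⟩)
    · exact Or.inr (Or.inr (Or.inl ⟨hb, ha⟩))
    · rcases trichotomous_of WellOrderingRel a b with h | h | h
      · exact Or.inl (Or.inr ⟨ha, hb, h⟩)
      · exact Or.inr (Or.inl h)
      · exact Or.inr (Or.inr (Or.inr ⟨hb, ha, h⟩))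
  · intro a h
    rcases h with ⟨h1, h2⟩ | ⟨_, _, h3⟩
    · exact h2 h1
    · exact irrefl_of WellOrderingRel a h3
  · rintro a b d (⟨ha, hb⟩ | ⟨ha, hb, hab⟩) (⟨hb', hd⟩ | ⟨hb', hd, hbd⟩)
    · exact absurd hb' hb
    · exact Or.inl ⟨ha, hd⟩
    · exact absurd hb' hb
    · exact Or.inr ⟨ha, hd, trans_of WellOrderingRel hab hbd⟩

lemma cTopRel_top {C : Type*} (c b : C) (hb : b ≠ c) : cTopRel c c b := Or.inl ⟨rfl, hb⟩

lemma countPref_comp_equiv {V V' C : Type*} [Fintype V] [Fintype V'] (e : V ≃ V')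
    (O : V' → C → C → Prop) (a b : C) :
    countPref (fun v => O (e v)) a b = countPref O a b :=
  Nat.card_congr (e.subtypeEquiv fun _ => Iff.rfl)

lemma countPref_sum {V₁ V₂ C : Type*} [Fintype V₁] [Fintype V₂]
    (O₁ : V₁ → C → C → Prop) (O₂ : V₂ → C → C → Prop) (a b : C) :
    countPref (Sum.elim O₁ O₂) a b = countPref O₁ a b + countPref O₂ a b := by
  unfold countPref
  rw [← Nat.card_sum]
  exact Nat.card_congr Equiv.subtypeSum

lemma countPref_const {V C : Type*} [Fintype V] (r : C → C → Prop) (a b : C) (h : r a b) :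
    countPref (fun _ : V => r) a b = Fintype.card V :=
  (Nat.card_congr (Equiv.subtypeUnivEquiv fun _ => h)).trans Nat.card_eq_fintype_card

lemma countPref_subtype_le {n : ℕ} {C : Type*} (D : Finset (Fin n))
    (O : Fin n → C → C → Prop) (a b : C) :
    countPref (fun i : {i : Fin n // i ∉ D} => O i.1) a b ≤ countPref O a b := by
  apply Nat.card_le_card_of_injective
    (fun x : {i : {i : Fin n // i ∉ D} // O i.1 a b} => (⟨x.1.1, x.2⟩ : {i : Fin n // O i a b}))
  intro x y h
  simp only [Subtype.mk.injEq] at h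
  exact Subtype.ext (Subtype.ext h)

end Aux

/-- for any election, candidate `c`, and `k > 0`: `c` can be made the
Condorcet winner by adding at most `k` voters iff `c` can be made the Condorcet winner
by deleting some voters and adding some voters, with the total number of deleted plus
added voters at most `k`. -/
theorem stmt11 {C : Type*} [Fintype C] {n : ℕ}
    (O : Fin n → C → C → Prop) (hO : ∀ i, IsStrictTotalOrder C (O i))
    (c : C) (k : ℕ) (hk : 0 < k) :
    (∃ m : ℕ, m ≤ k ∧ ∃ O' : Fin m → C → C → Prop,
      (∀ j, IsStrictTotalOrder C (O' j)) ∧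
      IsCondorcetWinner (Sum.elim O O' : Fin n ⊕ Fin m → C → C → Prop) c)
    ↔
    (∃ (D : Finset (Fin n)) (m : ℕ), D.card + m ≤ k ∧
      ∃ O' : Fin m → C → C → Prop,
        (∀ j, IsStrictTotalOrder C (O' j)) ∧
        IsCondorcetWinner
          (Sum.elim (fun i : {i : Fin n // i ∉ D} => O i.1) O'
            : {i : Fin n // i ∉ D} ⊕ Fin m → C → C → Prop) c) := by
  constructor
  · rintro ⟨m, hm, O', hO', hcw⟩
    refine ⟨∅, m, by simpa using hm, O', hO', ?_⟩
    -- transfer along the equivalence {i // i ∉ ∅} ≃ Fin n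
    let e : ({i : Fin n // i ∉ (∅ : Finset (Fin n))} ⊕ Fin m) ≃ (Fin n ⊕ Fin m) :=
      Equiv.sumCongr (Equiv.subtypeUnivEquiv (by simp)) (Equiv.refl _)
    have hfun : (Sum.elim (fun i : {i : Fin n // i ∉ (∅ : Finset (Fin n))} => O i.1) O')
        = fun v => (Sum.elim O O') (e v) := by
      funext v; cases v <;> rfl
    intro b hb
    have := hcw b hb
    rw [hfun]
    calc Fintype.card ({i : Fin n // i ∉ (∅ : Finset (Fin n))} ⊕ Fin m)
        = Fintype.card (Fin n ⊕ Fin m) := Fintype.card_congr e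
      _ < 2 * countPref (Sum.elim O O') c b := this
      _ = 2 * countPref (fun v => (Sum.elim O O') (e v)) c b := by
          rw [countPref_comp_equiv e (Sum.elim O O') c b]
  · rintro ⟨D, m, hm, O', hO', hcw⟩
    refine ⟨m + D.card, by omega, ?_⟩
    -- new profile: the m added voters plus D.card voters with c on top
    refine ⟨fun j => Sum.elim O' (fun _ : Fin D.card => cTopRel c) (finSumFinEquiv.symm j),
      ?_, ?_⟩
    · intro j
      dsimp only
      rcases h : finSumFinEquiv.symm j with j' | j'
      · exact hO' j'
      · exact cTopRel_sto c
    · intro b hb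
      have hgiven := hcw b hb
      have hcardsub : Fintype.card {i : Fin n // i ∉ D} = n - D.card := by
        classical
        rw [Fintype.card_subtype]
        have : (Finset.univ.filter fun i : Fin n => i ∉ D) = Dᶜ := by
          ext i; simp
        rw [this, Finset.card_compl, Fintype.card_fin]
      have hD_le : D.card ≤ n := by
        simpa using Finset.card_le_card (Finset.subset_univ D)
      -- counts
      have hsplit := countPref_sum (fun i : {i : Fin n // i ∉ D} => O i.1) O' c b
      set P := countPref (fun i : {i : Fin n // i ∉ D} => O i.1) c b
      have hle : P ≤ countPref O c b := countPref_subtype_le D O c b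
      have hnew : countPref (Sum.elim O
          (fun j => Sum.elim O' (fun _ : Fin D.card => cTopRel c) (finSumFinEquiv.symm j))) c b
          = countPref O c b + (countPref O' c b + D.card) := by
        rw [countPref_sum]
        congr 1
        have := countPref_comp_equiv finSumFinEquiv.symm
          (Sum.elim O' (fun _ : Fin D.card => cTopRel c)) c b
        rw [show (fun j => Sum.elim O' (fun _ : Fin D.card => cTopRel c) (finSumFinEquiv.symm j))
          = fun j => (Sum.elim O' (fun _ : Fin D.card => cTopRel c)) (finSumFinEquiv.symm j)
          from rfl, this, countPref_sum,
          countPref_const (cTopRel c) c b (cTopRel_top c b hb), Fintype.card_fin]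
      rw [hnew]
      have hcards : Fintype.card ({i : Fin n // i ∉ D} ⊕ Fin m) = (n - D.card) + m := by
        simp [Fintype.card_sum, hcardsub]
      rw [hcards, hsplit] at hgiven
      have hcardnew : Fintype.card (Fin n ⊕ Fin (m + D.card)) = n + (m + D.card) := by
        simp [Fintype.card_sum]
      rw [hcardnew]
      omega
end

section
/- In the 29-voter election over {a,b,c,d} with 2 voters a≻b≻c≻d, 2 voters a≻c≻d≻b, 1 voter a≻b≻d≻c, 8 voters b≻c≻a≻d, 8 voters c≻d≻a≻b, and 8 voters d≻b≻a≻c, the deletion score of candidate b equals 8: deleting the 8 c-voters makes b the Condorcet winner, and no set of at most 7 voters can be deleted to achieve this. -/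
/-- Candidates `a=0`, `b=1`, `c=2`, `d=3`. The ballot (ranking, best first) of each of
the 29 voters: 2 voters a≻b≻c≻d, 2 voters a≻c≻d≻b, 1 voter a≻b≻d≻c, 8 voters b≻c≻a≻d,
8 voters c≻d≻a≻b, and 8 voters d≻b≻a≻c. -/
def theBallot (i : Fin 29) : List (Fin 4) :=
  if i.val < 2 then [0, 1, 2, 3]
  else if i.val < 4 then [0, 2, 3, 1]
  else if i.val < 5 then [0, 1, 3, 2]
  else if i.val < 13 then [1, 2, 0, 3]
  else if i.val < 21 then [2, 3, 0, 1]
  else [3, 1, 0, 2]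

/-- The preference profile of the 29-voter election: voter `i` prefers `x` to `y` iff
`x` occurs before `y` on voter `i`'s ballot. -/
def theProfile (i : Fin 29) (x y : Fin 4) : Prop :=
  (theBallot i).idxOf x < (theBallot i).idxOf y

/-- `c` becomes the Condorcet winner after changing the votes of at most `k` voters. -/
def ReplacementScoreLE (c : Fin 4) (k : ℕ) : Prop :=
  ∃ O' : Fin 29 → Fin 4 → Fin 4 → Prop,
    (∀ i, IsStrictTotalOrder (Fin 4) (O' i)) ∧
    Nat.card {i : Fin 29 // O' i ≠ theProfile i} ≤ k ∧
    IsCondorcetWinner O' c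

/-- `c` is the Condorcet winner after deleting the voters in `D`. -/
def WinsAfterDeleting (D : Finset (Fin 29)) (c : Fin 4) : Prop :=
  IsCondorcetWinner (fun i : {i : Fin 29 // i ∉ D} => theProfile i.1) c

instance (i : Fin 29) (x y : Fin 4) : Decidable (theProfile i x y) := by
  unfold theProfile; infer_instance

lemma countPref_eq (D : Finset (Fin 29)) (a b : Fin 4) :
    countPref (fun i : {i : Fin 29 // i ∉ D} => theProfile i.1) a b
      = (Finset.univ.filter (fun i : Fin 29 => i ∉ D ∧ theProfile i a b)).card := by
  unfold countPref
  rw [Nat.card_congr (Equiv.subtypeSubtypeEquivSubtypeInter (fun i : Fin 29 => i ∉ D)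
    (fun i => theProfile i a b)), Nat.card_eq_fintype_card, Fintype.card_subtype]

lemma cardV_eq (D : Finset (Fin 29)) :
    Fintype.card {i : Fin 29 // i ∉ D} = 29 - D.card := by
  rw [Fintype.card_subtype]
  have : Finset.univ.filter (fun i : Fin 29 => i ∉ D) = Dᶜ := by
    ext i; simp
  rw [this, Finset.card_compl, Fintype.card_fin]

/-- the deletion score of candidate `b` (candidate 1) equals 8: deleting
the 8 c-voters (voters 13–20) makes `b` the Condorcet winner, and no set of at most 7
voters can be deleted to achieve this. -/
theorem stmt16 :
    WinsAfterDeleting (Finset.univ.filter (fun i : Fin 29 => 13 ≤ i.val ∧ i.val < 21)) 1 ∧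
    (Finset.univ.filter (fun i : Fin 29 => 13 ≤ i.val ∧ i.val < 21)).card = 8 ∧
    (∀ D : Finset (Fin 29), D.card ≤ 7 → ¬ WinsAfterDeleting D 1) := by
  refine ⟨?_, by decide, ?_⟩
  · intro x hx
    rw [countPref_eq, cardV_eq]
    revert hx
    fin_cases x <;> decide
  · intro D hD hW
    have h := hW 3 (by decide)
    rw [countPref_eq, cardV_eq] at h
    have h1 : (Finset.univ.filter (fun i : Fin 29 => i ∉ D ∧ theProfile i 1 3)).card
        ≤ (Finset.univ.filter (fun i : Fin 29 => theProfile i 1 3)).card := by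
      apply Finset.card_le_card
      intro i hi
      simp only [Finset.mem_filter] at *
      exact ⟨hi.1, hi.2.2⟩
    have h2 : (Finset.univ.filter (fun i : Fin 29 => theProfile i 1 3)).card = 11 := by decide
    omega
end
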